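/- Let F, G, H : [0,∞) → (0,∞) be continuous and set I(u) = ∫_0^u G(r)/H(r) dr. Then for all t > 0: ∫_0^t ∫_0^s F(r) · (G(s)/G(r)) · (H(t)/H(s)) dr ds = ∫_0^t ∫_0^s F(r) · (I(r)/I(s)) · (G(s)/G(r)) · (I(t)/I(s)) · (H(t)/H(s)) dr ds. Equivalently, the double integral of F(r) G̃(s)/G̃(r) · H̃(t)/H̃(s) over 0 ≤ r ≤ s ≤ t equals that of F(r) G(s)/G(r) · H(t)/H(s), where G̃(s) = I(s)^{-1} G(s) and H̃(s) = I(s) H(s). -/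

import Mathlib

open Set MeasureTheory intervalIntegral Topology Filter

noncomputable def braidI (G H : ℝ → ℝ) (x : ℝ) : ℝ := ∫ u in (0:ℝ)..x, G u / H u
noncomputable def braidA (F G : ℝ → ℝ) (s : ℝ) : ℝ := ∫ r in (0:ℝ)..s, F r / G r
noncomputable def braidB (F G H : ℝ → ℝ) (s : ℝ) : ℝ :=
  ∫ r in (0:ℝ)..s, F r * braidI G H r / G r

section basics

variable {F G H : ℝ → ℝ}
set_option linter.unusedSectionVars false

variable (hF : ContinuousOn F (Set.Ici 0)) (hG : ContinuousOn G (Set.Ici 0))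
    (hH : ContinuousOn H (Set.Ici 0))
    (hFpos : ∀ x ∈ Set.Ici (0 : ℝ), 0 < F x)
    (hGpos : ∀ x ∈ Set.Ici (0 : ℝ), 0 < G x)
    (hHpos : ∀ x ∈ Set.Ici (0 : ℝ), 0 < H x)

include hF hG hH hFpos hGpos hHpos


lemma braid_g_cont : ContinuousOn (fun u => G u / H u) (Ici 0) :=
  hG.div hH (fun x hx => (hHpos x hx).ne')

lemma braid_g_int {a b : ℝ} (ha : 0 ≤ a) (hb : 0 ≤ b) :
    IntervalIntegrable (fun u => G u / H u) volume a b := by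
  apply ((braid_g_cont hF hG hH hFpos hGpos hHpos).mono ?_).intervalIntegrable
  intro x hx
  rcases Set.mem_uIcc.mp hx with h | h
  · exact le_trans ha h.1
  · exact le_trans hb h.1

lemma braidI_cont {c : ℝ} (hc : 0 ≤ c) : ContinuousOn (braidI G H) (Icc 0 c) := by
  have h : IntegrableOn (fun u => G u / H u) (uIcc 0 c) volume := by
    rw [uIcc_of_le hc]
    exact ((braid_g_cont hF hG hH hFpos hGpos hHpos).mono Icc_subset_Ici_self).integrableOn_compact
      isCompact_Icc
  have h2 := intervalIntegral.continuousOn_primitive_interval (μ := volume) h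
  rw [uIcc_of_le hc] at h2
  exact h2

lemma braidI_deriv {x : ℝ} (hx : 0 < x) :
    HasDerivAt (braidI G H) (G x / H x) x := by
  have h1 : IntervalIntegrable (fun u => G u / H u) volume 0 x :=
    braid_g_int hF hG hH hFpos hGpos hHpos le_rfl hx.le
  have h2 : StronglyMeasurableAtFilter (fun u => G u / H u) (𝓝 x) volume :=
    ContinuousOn.stronglyMeasurableAtFilter isOpen_Ioi
      ((braid_g_cont hF hG hH hFpos hGpos hHpos).mono Ioi_subset_Ici_self) x hx
  have h3 : ContinuousAt (fun u => G u / H u) x :=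
    (braid_g_cont hF hG hH hFpos hGpos hHpos).continuousAt (Ici_mem_nhds hx)
  exact intervalIntegral.integral_hasDerivAt_right h1 h2 h3


lemma braidI_mono {r s : ℝ} (hr : 0 ≤ r) (hrs : r ≤ s) :
    braidI G H r ≤ braidI G H s := by
  have h1 := braid_g_int hF hG hH hFpos hGpos hHpos (le_refl (0:ℝ)) hr
  have h2 := braid_g_int hF hG hH hFpos hGpos hHpos hr (hr.trans hrs)
  have h3 := intervalIntegral.integral_add_adjacent_intervals h1 h2
  have h4 : 0 ≤ ∫ u in r..s, G u / H u := by
    apply intervalIntegral.integral_nonneg hrs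
    intro y hy
    exact div_nonneg (hGpos y (hr.trans hy.1)).le (hHpos y (hr.trans hy.1)).le
  unfold braidI
  linarith [h3]

lemma braidI_nonneg {x : ℝ} (hx : 0 ≤ x) : 0 ≤ braidI G H x := by
  have h0 : braidI G H 0 = 0 := intervalIntegral.integral_same
  have := braidI_mono hF hG hH hFpos hGpos hHpos le_rfl hx
  linarith

lemma braidI_lb {x m : ℝ} (hx : 0 ≤ x) (hm : ∀ y ∈ Icc 0 x, m ≤ G y / H y) :
    m * x ≤ braidI G H x := by
  have h1 : (∫ _ in (0:ℝ)..x, m) = m * x := by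
    rw [intervalIntegral.integral_const]
    simp [mul_comm]
  calc m * x = ∫ _ in (0:ℝ)..x, m := h1.symm
    _ ≤ ∫ u in (0:ℝ)..x, G u / H u :=
        intervalIntegral.integral_mono_on hx intervalIntegrable_const
          (braid_g_int hF hG hH hFpos hGpos hHpos le_rfl hx) hm
    _ = braidI G H x := rfl


lemma braid_fA_cont : ContinuousOn (fun r => F r / G r) (Ici 0) :=
  hF.div hG (fun x hx => (hGpos x hx).ne')

lemma braid_fA_int {x : ℝ} (hx : 0 ≤ x) :
    IntervalIntegrable (fun r => F r / G r) volume 0 x := by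
  apply ((braid_fA_cont hF hG hH hFpos hGpos hHpos).mono ?_).intervalIntegrable
  rw [uIcc_of_le hx]
  exact Icc_subset_Ici_self

lemma braidA_cont {c : ℝ} (hc : 0 ≤ c) : ContinuousOn (braidA F G) (Icc 0 c) := by
  have h : IntegrableOn (fun r => F r / G r) (uIcc 0 c) volume := by
    rw [uIcc_of_le hc]
    exact ((braid_fA_cont hF hG hH hFpos hGpos hHpos).mono Icc_subset_Ici_self).integrableOn_compact
      isCompact_Icc
  have h2 := intervalIntegral.continuousOn_primitive_interval (μ := volume) h
  rw [uIcc_of_le hc] at h2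
  exact h2

lemma braidA_deriv {x : ℝ} (hx : 0 < x) :
    HasDerivAt (braidA F G) (F x / G x) x := by
  have h2 : StronglyMeasurableAtFilter (fun r => F r / G r) (𝓝 x) volume :=
    ContinuousOn.stronglyMeasurableAtFilter isOpen_Ioi
      ((braid_fA_cont hF hG hH hFpos hGpos hHpos).mono Ioi_subset_Ici_self) x hx
  have h3 : ContinuousAt (fun r => F r / G r) x :=
    (braid_fA_cont hF hG hH hFpos hGpos hHpos).continuousAt (Ici_mem_nhds hx)
  exact intervalIntegral.integral_hasDerivAt_right (braid_fA_int hF hG hH hFpos hGpos hHpos hx.le) h2 h3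

lemma braid_fB_cont {c : ℝ} (hc : 0 ≤ c) :
    ContinuousOn (fun r => F r * braidI G H r / G r) (Icc 0 c) :=
  ((hF.mono Icc_subset_Ici_self).mul (braidI_cont hF hG hH hFpos hGpos hHpos hc)).div
    (hG.mono Icc_subset_Ici_self) (fun x hx => (hGpos x hx.1).ne')

lemma braid_fB_int {x : ℝ} (hx : 0 ≤ x) :
    IntervalIntegrable (fun r => F r * braidI G H r / G r) volume 0 x := by
  apply ((braid_fB_cont hF hG hH hFpos hGpos hHpos hx).mono ?_).intervalIntegrable
  rw [uIcc_of_le hx]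

lemma braidB_cont {c : ℝ} (hc : 0 ≤ c) : ContinuousOn (braidB F G H) (Icc 0 c) := by
  have h : IntegrableOn (fun r => F r * braidI G H r / G r) (uIcc 0 c) volume := by
    rw [uIcc_of_le hc]
    exact (braid_fB_cont hF hG hH hFpos hGpos hHpos hc).integrableOn_compact isCompact_Icc
  have h2 := intervalIntegral.continuousOn_primitive_interval (μ := volume) h
  rw [uIcc_of_le hc] at h2
  exact h2

lemma braidB_deriv {x : ℝ} (hx : 0 < x) :
    HasDerivAt (braidB F G H) (F x * braidI G H x / G x) x := by
  have hIc : ContinuousOn (braidI G H) (Ioi 0) := fun y hy =>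
    (braidI_deriv hF hG hH hFpos hGpos hHpos hy).continuousAt.continuousWithinAt
  have h2 : StronglyMeasurableAtFilter (fun r => F r * braidI G H r / G r) (𝓝 x) volume :=
    ContinuousOn.stronglyMeasurableAtFilter isOpen_Ioi
      (((hF.mono Ioi_subset_Ici_self).mul hIc).div (hG.mono Ioi_subset_Ici_self)
        (fun y hy => (hGpos y (mem_Ici.mpr (le_of_lt (mem_Ioi.mp hy)))).ne')) x hx
  have h3 : ContinuousAt (fun r => F r * braidI G H r / G r) x := by
    have hFc : ContinuousAt F x := hF.continuousAt (Ici_mem_nhds hx)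
    have hGc : ContinuousAt G x := hG.continuousAt (Ici_mem_nhds hx)
    exact (hFc.mul (braidI_deriv hF hG hH hFpos hGpos hHpos hx).continuousAt).div hGc (hGpos x hx.le).ne'
  exact intervalIntegral.integral_hasDerivAt_right
    (braid_fB_int hF hG hH hFpos hGpos hHpos hx.le) h2 h3

lemma braidB_nonneg {x : ℝ} (hx : 0 ≤ x) : 0 ≤ braidB F G H x := by
  apply intervalIntegral.integral_nonneg hx
  intro r hr
  exact div_nonneg (mul_nonneg (hFpos r hr.1).le (braidI_nonneg hF hG hH hFpos hGpos hHpos hr.1))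
    (hGpos r hr.1).le

lemma braidB_le {t M : ℝ} (hM : ∀ y ∈ Icc 0 t, F y / G y ≤ M) (hM0 : 0 ≤ M)
    {s : ℝ} (hs : s ∈ Icc 0 t) :
    braidB F G H s ≤ s * (M * braidI G H s) := by
  have key : ∀ r ∈ Icc (0:ℝ) s, F r * braidI G H r / G r ≤ M * braidI G H s := by
    intro r hr
    rw [mul_div_right_comm]
    exact mul_le_mul (hM r ⟨hr.1, hr.2.trans hs.2⟩)
      (braidI_mono hF hG hH hFpos hGpos hHpos hr.1 hr.2)
      (braidI_nonneg hF hG hH hFpos hGpos hHpos hr.1) hM0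
  have h2 : braidB F G H s ≤ ∫ _ in (0:ℝ)..s, M * braidI G H s :=
    intervalIntegral.integral_mono_on hs.1 (braid_fB_int hF hG hH hFpos hGpos hHpos hs.1)
      intervalIntegrable_const key
  have h3 : (∫ _ in (0:ℝ)..s, M * braidI G H s) = s * (M * braidI G H s) := by
    rw [intervalIntegral.integral_const]
    simp
  linarith


lemma braid_side1 {t : ℝ} (ht : 0 < t) :
    (∫ s in (0:ℝ)..t, (G s * (H t / H s)) * braidA F G s)
      = H t * (braidI G H t * braidA F G t - braidB F G H t) := by
  have hcont : ContinuousOn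
      (fun s => H t * (braidI G H s * braidA F G s - braidB F G H s)) (Icc 0 t) :=
    continuousOn_const.mul
      (((braidI_cont hF hG hH hFpos hGpos hHpos ht.le).mul
        (braidA_cont hF hG hH hFpos hGpos hHpos ht.le)).sub
        (braidB_cont hF hG hH hFpos hGpos hHpos ht.le))
  have hderiv : ∀ x ∈ Ioo (0:ℝ) t,
      HasDerivWithinAt (fun s => H t * (braidI G H s * braidA F G s - braidB F G H s))
        ((G x * (H t / H x)) * braidA F G x) (Ioi x) x := by
    intro x hx
    have hI := braidI_deriv hF hG hH hFpos hGpos hHpos hx.1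
    have hA := braidA_deriv hF hG hH hFpos hGpos hHpos hx.1
    have hB := braidB_deriv hF hG hH hFpos hGpos hHpos hx.1
    have h := ((hI.mul hA).sub hB).const_mul (H t)
    have heq : H t * ((G x / H x) * braidA F G x + braidI G H x * (F x / G x)
        - F x * braidI G H x / G x) = (G x * (H t / H x)) * braidA F G x := by ring
    exact (heq ▸ h).hasDerivWithinAt
  have hint : IntervalIntegrable (fun s => (G s * (H t / H s)) * braidA F G s) volume 0 t := by
    apply ContinuousOn.intervalIntegrable
    rw [uIcc_of_le ht.le]
    exact ((hG.mono Icc_subset_Ici_self).mul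
      (continuousOn_const.div (hH.mono Icc_subset_Ici_self)
        (fun x hx => (hHpos x hx.1).ne'))).mul
      (braidA_cont hF hG hH hFpos hGpos hHpos ht.le)
  have hFTC := intervalIntegral.integral_eq_sub_of_hasDeriv_right_of_le ht.le hcont hderiv hint
  rw [hFTC]
  have e0 : braidI G H 0 = 0 := intervalIntegral.integral_same
  have e1 : braidA F G 0 = 0 := intervalIntegral.integral_same
  have e2 : braidB F G H 0 = 0 := intervalIntegral.integral_same
  simp only [e0, e1, e2]
  ring


lemma braid_side2 {t : ℝ} (ht : 0 < t) :
    (∫ s in (0:ℝ)..t, (G s * (H t / H s)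
        * (braidI G H t / (braidI G H s * braidI G H s))) * braidB F G H s)
      = H t * (braidI G H t * braidA F G t - braidB F G H t) := by
  -- extremal bounds on [0, t]
  obtain ⟨xm, hxm, hxmmin⟩ := isCompact_Icc.exists_isMinOn (nonempty_Icc.mpr ht.le)
    ((braid_g_cont hF hG hH hFpos hGpos hHpos).mono Icc_subset_Ici_self)
  set m := G xm / H xm with hmdef
  have hm : ∀ y ∈ Icc (0:ℝ) t, m ≤ G y / H y := fun y hy => hxmmin hy
  have hm0 : 0 < m := div_pos (hGpos xm hxm.1) (hHpos xm hxm.1)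
  obtain ⟨xM, hxM, hxMmax⟩ := isCompact_Icc.exists_isMaxOn (nonempty_Icc.mpr ht.le)
    ((braid_fA_cont hF hG hH hFpos hGpos hHpos).mono Icc_subset_Ici_self)
  set M := F xM / G xM with hMdef
  have hM : ∀ y ∈ Icc (0:ℝ) t, F y / G y ≤ M := fun y hy => hxMmax hy
  have hM0 : 0 ≤ M := (div_pos (hFpos xM hxM.1) (hGpos xM hxM.1)).le
  obtain ⟨xg, hxg, hxgmax⟩ := isCompact_Icc.exists_isMaxOn (nonempty_Icc.mpr ht.le)
    ((braid_g_cont hF hG hH hFpos hGpos hHpos).mono Icc_subset_Ici_self)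
  set Mg := G xg / H xg with hMgdef
  have hMg : ∀ y ∈ Icc (0:ℝ) t, G y / H y ≤ Mg := fun y hy => hxgmax hy
  have hMg0 : 0 ≤ Mg := (div_pos (hGpos xg hxg.1) (hHpos xg hxg.1)).le
  have hIlb : ∀ s ∈ Ioc (0:ℝ) t, m * s ≤ braidI G H s := by
    intro s hs
    exact braidI_lb hF hG hH hFpos hGpos hHpos hs.1.le
      (fun y hy => hm y ⟨hy.1, hy.2.trans hs.2⟩)
  have hIpos : ∀ s ∈ Ioc (0:ℝ) t, 0 < braidI G H s := fun s hs =>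
    lt_of_lt_of_le (mul_pos hm0 hs.1) (hIlb s hs)
  have hItpos : 0 < braidI G H t := hIpos t ⟨ht, le_rfl⟩
  have hkey : ∀ s ∈ Ioc (0:ℝ) t,
      braidB F G H s / (braidI G H s * braidI G H s) ≤ M / m := by
    intro s hs
    have hIs := hIpos s hs
    have hBle := braidB_le hF hG hH hFpos hGpos hHpos hM hM0 ⟨hs.1.le, hs.2⟩
    have hlb := hIlb s hs
    rw [div_le_div_iff₀ (mul_pos hIs hIs) hm0]
    nlinarith [mul_le_mul_of_nonneg_right hBle hm0.le,
      mul_le_mul_of_nonneg_left hlb (mul_nonneg hM0 hIs.le)]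
  -- continuity of the antiderivative
  have hWcont : ContinuousOn (fun s => braidB F G H s / braidI G H s) (Icc 0 t) := by
    intro x hx
    rcases eq_or_lt_of_le hx.1 with h0 | h0
    · subst h0
      have hB0 : braidB F G H 0 = 0 := intervalIntegral.integral_same
      have htend : Filter.Tendsto (fun s => braidB F G H s / braidI G H s)
          (nhdsWithin 0 (Icc 0 t)) (nhds 0) := by
        apply squeeze_zero' (g := fun s : ℝ => M * s)
        · filter_upwards [self_mem_nhdsWithin] with s hs
          exact div_nonneg (braidB_nonneg hF hG hH hFpos hGpos hHpos hs.1)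
            (braidI_nonneg hF hG hH hFpos hGpos hHpos hs.1)
        · filter_upwards [self_mem_nhdsWithin] with s hs
          rcases eq_or_lt_of_le hs.1 with h1 | h1
          · have hB0' : braidB F G H s = 0 := by
              rw [← h1]; exact intervalIntegral.integral_same
            rw [hB0', zero_div, ← h1]
            simp
          · have hIs := hIpos s ⟨h1, hs.2⟩
            rw [div_le_iff₀ hIs]
            have hBle := braidB_le hF hG hH hFpos hGpos hHpos hM hM0 hs
            nlinarith [hBle]
        · have h2 : Filter.Tendsto (fun s : ℝ => M * s) (nhdsWithin 0 (Icc 0 t))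
              (nhds (M * 0)) :=
            ((continuous_const.mul continuous_id).tendsto 0).mono_left nhdsWithin_le_nhds
          simpa using h2
      have h00 : braidB F G H 0 / braidI G H 0 = 0 := by rw [hB0, zero_div]
      show Filter.Tendsto (fun s => braidB F G H s / braidI G H s)
        (nhdsWithin 0 (Icc 0 t)) (nhds (braidB F G H 0 / braidI G H 0))
      rw [h00]
      exact htend
    · exact ((braidB_cont hF hG hH hFpos hGpos hHpos ht.le).continuousWithinAt hx).div
        ((braidI_cont hF hG hH hFpos hGpos hHpos ht.le).continuousWithinAt hx)
        (hIpos x ⟨h0, hx.2⟩).ne'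
  have hcont : ContinuousOn (fun s => H t * braidI G H t
      * (braidA F G s - braidB F G H s / braidI G H s)) (Icc 0 t) :=
    continuousOn_const.mul
      ((braidA_cont hF hG hH hFpos hGpos hHpos ht.le).sub hWcont)
  -- derivative
  have hderiv : ∀ x ∈ Ioo (0:ℝ) t,
      HasDerivWithinAt (fun s => H t * braidI G H t
          * (braidA F G s - braidB F G H s / braidI G H s))
        ((G x * (H t / H x) * (braidI G H t / (braidI G H x * braidI G H x)))
          * braidB F G H x) (Ioi x) x := by
    intro x hx
    have hI := braidI_deriv hF hG hH hFpos hGpos hHpos hx.1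
    have hA := braidA_deriv hF hG hH hFpos hGpos hHpos hx.1
    have hB := braidB_deriv hF hG hH hFpos hGpos hHpos hx.1
    have hIx : braidI G H x ≠ 0 := (hIpos x ⟨hx.1, hx.2.le⟩).ne'
    have hq := hB.div hI hIx
    have h := (hA.sub hq).const_mul (H t * braidI G H t)
    have hGx : G x ≠ 0 := (hGpos x hx.1.le).ne'
    have hHx : H x ≠ 0 := (hHpos x hx.1.le).ne'
    have heq : H t * braidI G H t * (F x / G x
        - (F x * braidI G H x / G x * braidI G H x - braidB F G H x * (G x / H x))
          / braidI G H x ^ 2)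
        = (G x * (H t / H x) * (braidI G H t / (braidI G H x * braidI G H x)))
          * braidB F G H x := by
      field_simp
      ring
    exact (heq ▸ h).hasDerivWithinAt
  -- integrability
  have hint : IntervalIntegrable (fun s => (G s * (H t / H s)
      * (braidI G H t / (braidI G H s * braidI G H s))) * braidB F G H s) volume 0 t := by
    rw [intervalIntegrable_iff_integrableOn_Ioc_of_le ht.le]
    have hsub2 : Ioc (0:ℝ) t ⊆ Icc 0 t := Ioc_subset_Icc_self
    have hsub3 : Ioc (0:ℝ) t ⊆ Ici 0 := fun y hy => hy.1.le
    apply Integrable.mono' (g := fun _ => Mg * (H t * braidI G H t) * (M / m))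
      ((integrableOn_const_iff (by finiteness)).mpr (Or.inr measure_Ioc_lt_top))
    · apply ContinuousOn.aestronglyMeasurable ?_ measurableSet_Ioc
      refine ContinuousOn.mul (ContinuousOn.mul (ContinuousOn.mul ?_ ?_) ?_) ?_
      · exact hG.mono hsub3
      · exact continuousOn_const.div (hH.mono hsub3) (fun y hy => (hHpos y (hsub3 hy)).ne')
      · apply continuousOn_const.div
          (((braidI_cont hF hG hH hFpos hGpos hHpos ht.le).mono hsub2).mul
            ((braidI_cont hF hG hH hFpos hGpos hHpos ht.le).mono hsub2))
        intro y hy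
        exact (mul_pos (hIpos y hy) (hIpos y hy)).ne'
      · exact (braidB_cont hF hG hH hFpos hGpos hHpos ht.le).mono hsub2
    · rw [ae_restrict_iff' measurableSet_Ioc]
      apply Filter.Eventually.of_forall
      intro s hs
      have hIs := hIpos s hs
      have hnn : 0 ≤ (G s * (H t / H s) * (braidI G H t / (braidI G H s * braidI G H s)))
          * braidB F G H s := by
        apply mul_nonneg
        apply mul_nonneg
        apply mul_nonneg (hGpos s hs.1.le).le
        · exact div_nonneg (hHpos t ht.le).le (hHpos s hs.1.le).le
        · exact div_nonneg hItpos.le (mul_pos hIs hIs).le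
        · exact braidB_nonneg hF hG hH hFpos hGpos hHpos hs.1.le
      rw [Real.norm_eq_abs, abs_of_nonneg hnn]
      have hre : (G s * (H t / H s) * (braidI G H t / (braidI G H s * braidI G H s)))
          * braidB F G H s
          = (G s / H s) * (H t * braidI G H t)
            * (braidB F G H s / (braidI G H s * braidI G H s)) := by
        ring
      rw [hre]
      have h1 : (G s / H s) * (H t * braidI G H t) ≤ Mg * (H t * braidI G H t) :=
        mul_le_mul_of_nonneg_right (hMg s (hsub2 hs))
          (mul_nonneg (hHpos t ht.le).le hItpos.le)
      have h2 := hkey s hs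
      have h3 : 0 ≤ braidB F G H s / (braidI G H s * braidI G H s) :=
        div_nonneg (braidB_nonneg hF hG hH hFpos hGpos hHpos hs.1.le)
          (mul_pos hIs hIs).le
      have h4 : 0 ≤ Mg * (H t * braidI G H t) :=
        mul_nonneg hMg0 (mul_nonneg (hHpos t ht.le).le hItpos.le)
      exact mul_le_mul h1 h2 h3 h4
  have hFTC := intervalIntegral.integral_eq_sub_of_hasDeriv_right_of_le ht.le hcont hderiv hint
  rw [hFTC]
  have e1 : braidA F G 0 = 0 := intervalIntegral.integral_same
  have e2 : braidB F G H 0 = 0 := intervalIntegral.integral_same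
  simp only [e1, e2, zero_div, sub_zero, mul_zero, sub_zero]
  field_simp

end basics


open intervalIntegral in
/-- The integral identity (3.7) of Biane–Bougerol–O'Connell (braid relation for the
transformations `𝒯` in type `A₂`): for strictly positive continuous `F, G, H` on
`[0,∞)` and `I(u) = ∫₀ᵘ G/H`, the double integral over `0 ≤ r ≤ s ≤ t` of
`F(r)·(G(s)/G(r))·(H(t)/H(s))` equals that of
`F(r)·(G̃(s)/G̃(r))·(H̃(t)/H̃(s))`, where `G̃ = I⁻¹·G` and `H̃ = I·H`. -/
theorem braid_integral_identity
    (F G H : ℝ → ℝ)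
    (hF : ContinuousOn F (Set.Ici 0)) (hG : ContinuousOn G (Set.Ici 0))
    (hH : ContinuousOn H (Set.Ici 0))
    (hFpos : ∀ x ∈ Set.Ici (0 : ℝ), 0 < F x)
    (hGpos : ∀ x ∈ Set.Ici (0 : ℝ), 0 < G x)
    (hHpos : ∀ x ∈ Set.Ici (0 : ℝ), 0 < H x)
    (t : ℝ) (ht : 0 < t) :
    (∫ s in (0:ℝ)..t, ∫ r in (0:ℝ)..s,
        F r * (G s / G r) * (H t / H s))
      = ∫ s in (0:ℝ)..t, ∫ r in (0:ℝ)..s,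
          F r * ((∫ u in (0:ℝ)..r, G u / H u) / (∫ u in (0:ℝ)..s, G u / H u))
            * (G s / G r)
            * ((∫ u in (0:ℝ)..t, G u / H u) / (∫ u in (0:ℝ)..s, G u / H u))
            * (H t / H s) := by
  have L1 : ∀ s : ℝ, (∫ r in (0:ℝ)..s, F r * (G s / G r) * (H t / H s))
      = (G s * (H t / H s)) * braidA F G s := by
    intro s
    calc (∫ r in (0:ℝ)..s, F r * (G s / G r) * (H t / H s))
        = ∫ r in (0:ℝ)..s, (G s * (H t / H s)) * (F r / G r) :=
          intervalIntegral.integral_congr (fun r _ => by ring)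
      _ = (G s * (H t / H s)) * ∫ r in (0:ℝ)..s, F r / G r :=
          intervalIntegral.integral_const_mul _ _
  have L2 : ∀ s : ℝ, (∫ r in (0:ℝ)..s, F r * (braidI G H r / braidI G H s) * (G s / G r)
        * (braidI G H t / braidI G H s) * (H t / H s))
      = (G s * (H t / H s) * (braidI G H t / (braidI G H s * braidI G H s)))
          * braidB F G H s := by
    intro s
    calc (∫ r in (0:ℝ)..s, F r * (braidI G H r / braidI G H s) * (G s / G r)
          * (braidI G H t / braidI G H s) * (H t / H s))
        = ∫ r in (0:ℝ)..s, (G s * (H t / H s)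
            * (braidI G H t / (braidI G H s * braidI G H s)))
            * (F r * braidI G H r / G r) :=
          intervalIntegral.integral_congr (fun r _ => by ring)
      _ = (G s * (H t / H s) * (braidI G H t / (braidI G H s * braidI G H s)))
            * ∫ r in (0:ℝ)..s, F r * braidI G H r / G r :=
          intervalIntegral.integral_const_mul _ _
  calc (∫ s in (0:ℝ)..t, ∫ r in (0:ℝ)..s, F r * (G s / G r) * (H t / H s))
      = ∫ s in (0:ℝ)..t, (G s * (H t / H s)) * braidA F G s :=
        intervalIntegral.integral_congr (fun s _ => L1 s)
    _ = H t * (braidI G H t * braidA F G t - braidB F G H t) :=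
        braid_side1 hF hG hH hFpos hGpos hHpos ht
    _ = ∫ s in (0:ℝ)..t, (G s * (H t / H s)
          * (braidI G H t / (braidI G H s * braidI G H s))) * braidB F G H s :=
        (braid_side2 hF hG hH hFpos hGpos hHpos ht).symm
    _ = ∫ s in (0:ℝ)..t, ∫ r in (0:ℝ)..s,
          F r * (braidI G H r / braidI G H s) * (G s / G r)
            * (braidI G H t / braidI G H s) * (H t / H s) :=
        intervalIntegral.integral_congr (fun s _ => (L2 s).symm)
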